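/- Let Q ⊂ ℝ² be a toric diagram and let L be a lattice segment with edge vector w ∈ ℤ² \ {0}. Then the Minkowski sum Q + L is a toric diagram if and only if L contains no lattice points other than its two endpoints (equivalently, w is a primitive lattice vector) and w is not parallel to the edge vector of any edge of Q. -/

import Mathlib

open Set Pointwise

noncomputable section

/-- We work in the plane `ℝ × ℝ`. -/
abbrev V : Type := ℝ × ℝ

/-- The embedding of the lattice `ℤ × ℤ` into the plane. -/
def toR (p : ℤ × ℤ) : V := ((p.1 : ℝ), (p.2 : ℝ))

/-- The set of lattice points of the plane. -/
def latticePoints : Set V := Set.range toR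

/-- A lattice polytope: the convex hull of a nonempty finite set of lattice points. -/
def IsLatticePolytope (P : Set V) : Prop :=
  ∃ S : Finset (ℤ × ℤ), S.Nonempty ∧ P = convexHull ℝ (toR '' ↑S)

/-- A toric diagram: a two-dimensional lattice polytope such that every lattice point on its
topological boundary is an extreme point. -/
def IsToricDiagram (P : Set V) : Prop :=
  IsLatticePolytope P ∧ (interior P).Nonempty ∧
    ∀ x ∈ frontier P, x ∈ latticePoints → x ∈ P.extremePoints ℝ

/-- A lattice segment: the convex hull of two distinct lattice points. -/
def IsLatticeSegment (L : Set V) : Prop :=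
  ∃ a b : ℤ × ℤ, a ≠ b ∧ L = segment ℝ (toR a) (toR b)

/-- A lattice triangle: the convex hull of three affinely independent lattice points. -/
def IsLatticeTriangle (T : Set V) : Prop :=
  ∃ a b c : ℤ × ℤ, AffineIndependent ℝ ![toR a, toR b, toR c] ∧
    T = convexHull ℝ {toR a, toR b, toR c}

/-- `E` is an edge of `P`: a maximal (nondegenerate) line segment contained in the
topological boundary of `P`. -/
def IsEdge (P E : Set V) : Prop :=
  (∃ a b : V, a ≠ b ∧ E = segment ℝ a b) ∧ E ⊆ frontier P ∧
    ∀ F : Set V, (∃ a b : V, F = segment ℝ a b) → F ⊆ frontier P → E ⊆ F → F = E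

/-- `v` is an edge vector of `P` (the difference of the endpoints of some edge of `P`). -/
def IsEdgeVector (P : Set V) (v : V) : Prop :=
  ∃ a b : V, a ≠ b ∧ IsEdge P (segment ℝ a b) ∧ v = b - a

/-- Two plane vectors are parallel when their cross product vanishes. -/
def Par (v w : V) : Prop := v.1 * w.2 = v.2 * w.1

/-- `P` admits a lattice maximal Minkowski decomposition: `P` is a Minkowski sum of at
least two lattice polytopes, each of which is a lattice segment or a lattice triangle. -/
def HasLatticeMaximalDecomposition (P : Set V) : Prop :=
  ∃ (m : ℕ) (Ps : Fin (m + 1) → Set V), 1 ≤ m ∧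
    P = ∑ k, Ps k ∧ ∀ k, IsLatticeSegment (Ps k) ∨ IsLatticeTriangle (Ps k)

/-- A convex polytope: the convex hull of a nonempty finite set of points. -/
def IsConvexPolytope (A : Set V) : Prop :=
  ∃ S : Finset V, S.Nonempty ∧ A = convexHull ℝ (↑S : Set V)

/-- `A` is a homothet `λ • P + t` (`λ > 0`) of `P`. -/
def IsHomothet (A P : Set V) : Prop :=
  ∃ (l : ℝ) (t : V), 0 < l ∧ A = (fun x => l • x + t) '' P

/-- A (nondegenerate) line segment. -/
def IsSegmentSet (A : Set V) : Prop := ∃ a b : V, a ≠ b ∧ A = segment ℝ a b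

/-- A triangle: the convex hull of three affinely independent points. -/
def IsTriangleSet (A : Set V) : Prop :=
  ∃ a b c : V, AffineIndependent ℝ ![a, b, c] ∧ A = convexHull ℝ {a, b, c}

/-- A convex polytope is Minkowski-indecomposable if in every Minkowski decomposition
into two convex polytopes, one of the summands is a point or a homothet of the polytope. -/
def MinkowskiIndecomposable (Q : Set V) : Prop :=
  ∀ A B : Set V, IsConvexPolytope A → IsConvexPolytope B → Q = A + B →
    (∃ x, A = {x}) ∨ IsHomothet A Q ∨ (∃ x, B = {x}) ∨ IsHomothet B Q

/-- A parallelogram: a quadrilateral whose vertices `v₁ v₂ v₃ v₄` in cyclic order satisfy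
`v₁ + v₃ = v₂ + v₄`. -/
def IsParallelogram (P : Set V) : Prop :=
  ∃ w : Fin 4 → V, Function.Injective w ∧ P.extremePoints ℝ = Set.range w ∧
    w 0 + w 2 = w 1 + w 3

/-- The Gauntlett–Martelli–Sparks–Waldram toric diagram `𝒴^{p,q}`. -/
def GMSW (p q : ℤ) : Set V :=
  convexHull ℝ (toR '' ({(0, 0), (1, 0), (p, p), (p - q - 1, p - q)} : Set (ℤ × ℤ)))

/-- Cross product of lattice vectors. -/
def crossZ (u w : ℤ × ℤ) : ℤ := u.1 * w.2 - u.2 * w.1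

section Helpers

namespace Stmt0

/-- linear functionals on the plane -/
abbrev LF := V →L[ℝ] ℝ

lemma lf_apply (f : LF) (z : V) : f z = z.1 * f (1,0) + z.2 * f (0,1) := by
  obtain ⟨x, y⟩ := z
  have hz : ((x,y) : V) = x • ((1:ℝ),(0:ℝ)) + y • ((0:ℝ),(1:ℝ)) := by
    ext <;> simp
  rw [hz, map_add, map_smul, map_smul, smul_eq_mul, smul_eq_mul]
  simp

lemma lf_exists_ne (f : LF) (hf : f ≠ 0) : f (1,0) ≠ 0 ∨ f (0,1) ≠ 0 := by
  by_contra h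
  push_neg at h
  exact hf (ContinuousLinearMap.ext fun z => by rw [lf_apply, h.1, h.2]; simp)

lemma cross_eq_zero {f : LF} {u z : V} (hf : f ≠ 0) (hu : f u = 0) (hz : f z = 0) :
    u.1 * z.2 = u.2 * z.1 := by
  set α := f (1,0) with hα
  set β := f (0,1) with hβ
  have hu' : u.1 * α + u.2 * β = 0 := by rw [← lf_apply]; exact hu
  have hz' : z.1 * α + z.2 * β = 0 := by rw [← lf_apply]; exact hz
  rcases lf_exists_ne f hf with h | h
  · have key : α * (u.1 * z.2 - u.2 * z.1) = 0 := by linear_combination z.2 * hu' - u.2 * hz'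
    have := mul_eq_zero.1 key
    rcases this with h' | h'
    · exact absurd h' h
    · linarith [h']
  · have key : β * (u.1 * z.2 - u.2 * z.1) = 0 := by linear_combination u.1 * hz' - z.1 * hu'
    rcases mul_eq_zero.1 key with h' | h'
    · exact absurd h' h
    · linarith [h']

lemma exists_smul_of_cross {u z : V} (hu : u ≠ 0) (h : u.1 * z.2 = u.2 * z.1) :
    ∃ t : ℝ, z = t • u := by
  have hu' : u.1 ≠ 0 ∨ u.2 ≠ 0 := by
    by_contra hc; push_neg at hc; exact hu (Prod.ext hc.1 hc.2)
  rcases hu' with h1 | h2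
  · refine ⟨z.1 / u.1, ?_⟩
    ext
    · simp [Prod.smul_def, smul_eq_mul]; field_simp
    · simp [Prod.smul_def, smul_eq_mul]; field_simp; linarith [h]
  · refine ⟨z.2 / u.2, ?_⟩
    ext
    · simp [Prod.smul_def, smul_eq_mul]; field_simp; linarith [h]
    · simp [Prod.smul_def, smul_eq_mul]; field_simp


/-! ### Faces -/

def face (f : LF) (A : Set V) : Set V := {x ∈ A | ∀ y ∈ A, f y ≤ f x}

lemma face_subset (f : LF) (A : Set V) : face f A ⊆ A := fun _ h => h.1

lemma face_isExposed (f : LF) (A : Set V) : IsExposed ℝ A (face f A) :=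
  fun _ => ⟨f, rfl⟩

lemma face_isExtreme (f : LF) (A : Set V) : IsExtreme ℝ A (face f A) :=
  (face_isExposed f A).isExtreme

lemma face_nonempty {A : Set V} (hA : IsCompact A) (hne : A.Nonempty) (f : LF) :
    (face f A).Nonempty := by
  obtain ⟨x, hx, hmax⟩ := hA.exists_isMaxOn hne f.continuous.continuousOn
  exact ⟨x, hx, fun y hy => hmax hy⟩

lemma face_convex {A : Set V} (hA : Convex ℝ A) (f : LF) : Convex ℝ (face f A) := by
  intro x hx y hy s t hs ht hst
  refine ⟨hA hx.1 hy.1 hs ht hst, fun z hz => ?_⟩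
  have h1 := hx.2 z hz
  have h2 := hy.2 z hz
  have : f (s • x + t • y) = s * f x + t * f y := by
    rw [map_add, map_smul, map_smul]; rfl
  rw [this]
  have h3 : s * f z ≤ s * f x := mul_le_mul_of_nonneg_left h1 hs
  have h4 : t * f z ≤ t * f y := mul_le_mul_of_nonneg_left h2 ht
  have h5 : s * f z + t * f z = f z := by rw [← add_mul, hst, one_mul]
  linarith

lemma mem_face_of_eq {A : Set V} {f : LF} {x y : V} (hx : x ∈ face f A) (hy : y ∈ A)
    (h : f y = f x) : y ∈ face f A :=
  ⟨hy, fun z hz => h ▸ hx.2 z hz⟩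

lemma face_add {A B : Set V} (hA : IsCompact A) (hAne : A.Nonempty)
    (hB : IsCompact B) (hBne : B.Nonempty) (f : LF) :
    face f (A + B) = face f A + face f B := by
  obtain ⟨a0, ha0⟩ := face_nonempty hA hAne f
  obtain ⟨b0, hb0⟩ := face_nonempty hB hBne f
  apply Set.Subset.antisymm
  · rintro x ⟨hx, hmax⟩
    obtain ⟨p, hp, q, hq, rfl⟩ := hx
    have h0 : f (a0 + b0) ≤ f (p + q) := hmax _ (Set.add_mem_add ha0.1 hb0.1)
    have hp' : f p ≤ f a0 := ha0.2 p hp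
    have hq' : f q ≤ f b0 := hb0.2 q hq
    rw [map_add, map_add] at h0
    have e1 : f p = f a0 := by linarith
    have e2 : f q = f b0 := by linarith
    exact Set.add_mem_add (mem_face_of_eq ha0 hp e1) (mem_face_of_eq hb0 hq e2)
  · rintro x ⟨p, hp, q, hq, rfl⟩
    refine ⟨Set.add_mem_add hp.1 hq.1, ?_⟩
    rintro y ⟨u, hu, w, hw, rfl⟩
    rw [map_add, map_add]
    exact add_le_add (hp.2 u hu) (hq.2 w hw)

lemma face_subset_frontier {A : Set V} {f : LF} (hf : f ≠ 0) : face f A ⊆ frontier A := by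
  rintro x ⟨hxA, hmax⟩
  rw [frontier, Set.mem_diff]
  refine ⟨subset_closure hxA, fun hint => ?_⟩
  obtain ⟨z, hz⟩ : ∃ z : V, f z > 0 := by
    obtain ⟨w, hw⟩ := DFunLike.ne_iff.1 hf
    have hw' : f w ≠ 0 := by simpa using hw
    rcases hw'.lt_or_gt with h | h
    · exact ⟨-w, by rw [map_neg]; linarith⟩
    · exact ⟨w, h⟩
  obtain ⟨ε, hε, hball⟩ := Metric.isOpen_iff.1 isOpen_interior x hint
  have hzne : z ≠ 0 := by rintro rfl; simp at hz
  have hznorm : (0:ℝ) < ‖z‖ := norm_pos_iff.2 hzne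
  set δ := ε / (2 * ‖z‖) with hδ
  have hδpos : 0 < δ := by positivity
  have hmem : x + δ • z ∈ A := by
    apply interior_subset
    apply hball
    rw [Metric.mem_ball, dist_eq_norm]
    have : x + δ • z - x = δ • z := by abel
    rw [this, norm_smul, Real.norm_eq_abs, abs_of_pos hδpos, hδ]
    rw [div_mul_eq_mul_div]
    rw [div_lt_iff₀ (by positivity)]
    nlinarith
  have := hmax _ hmem
  rw [map_add, map_smul, smul_eq_mul] at this
  nlinarith

lemma face_closed {A : Set V} (hA : IsClosed A) (f : LF) : IsClosed (face f A) := by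
  have : face f A = A ∩ ⋂ y ∈ A, {x : V | f y ≤ f x} := by
    ext x; simp [face]
  rw [this]
  apply hA.inter
  apply isClosed_biInter
  intro y _
  exact isClosed_le continuous_const f.continuous

/-! ### Supporting functionals -/

lemma exists_supporting {A : Set V} (hA : Convex ℝ A) (hcl : IsClosed A)
    (hint : (interior A).Nonempty) {x : V} (hx : x ∈ frontier A) :
    ∃ f : LF, f ≠ 0 ∧ x ∈ face f A := by
  have hxi : x ∉ interior A := hx.2
  obtain ⟨f, hf⟩ := geometric_hahn_banach_open_point hA.interior isOpen_interior hxi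
  obtain ⟨z, hzint⟩ := hint
  have hfne : f ≠ 0 := by
    intro h
    have := hf z hzint
    rw [h] at this
    simp at this
  have hxA : x ∈ A := by
    have : x ∈ closure A := hx.1
    rwa [hcl.closure_eq] at this
  refine ⟨f, hfne, hxA, fun y hy => ?_⟩
  by_contra hlt
  push_neg at hlt
  have hz : f z < f x := hf z hzint
  have hd1 : (0:ℝ) < f x - f z := by linarith
  have hd2 : f x - f z < f y - f z := by linarith
  set t : ℝ := ((f x - f z) / (f y - f z) + 1) / 2 with ht
  have hyz : (0:ℝ) < f y - f z := by linarith
  have hts : (f x - f z) / (f y - f z) < 1 := by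
    rw [div_lt_one hyz]; linarith
  have hts0 : 0 < (f x - f z) / (f y - f z) := div_pos hd1 hyz
  have ht1 : t < 1 := by rw [ht]; linarith
  have ht0 : 0 < t := by rw [ht]; linarith
  have htstar : (f x - f z) / (f y - f z) < t := by rw [ht]; linarith
  have hmem : (1 - t) • z + t • y ∈ interior A :=
    hA.combo_interior_closure_mem_interior hzint (subset_closure hy)
      (by linarith) (le_of_lt ht0) (by ring)
  have hval : f ((1 - t) • z + t • y) = (1 - t) * f z + t * f y := by
    rw [map_add, map_smul, map_smul]; rfl
  have hbig : f x < (1 - t) * f z + t * f y := by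
    have : f x - f z < t * (f y - f z) := by
      rw [div_lt_iff₀ hyz] at htstar
      linarith
    nlinarith
  have := hf _ hmem
  rw [hval] at this
  linarith

/-! ### Structure of faces: faces with two points are segments -/

lemma face_mem_param {A : Set V} {f : LF} (hf : f ≠ 0) {q1 x : V}
    (h1 : q1 ∈ face f A) (hx : x ∈ face f A) : f (x - q1) = 0 := by
  have e1 : f x ≤ f q1 := h1.2 x hx.1
  have e2 : f q1 ≤ f x := hx.2 q1 h1.1
  rw [map_sub]; linarith

lemma face_eq_segment {A : Set V} (hA : IsCompact A) (hconv : Convex ℝ A)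
    {f : LF} (hf : f ≠ 0) {q1 q2 : V} (h1 : q1 ∈ face f A) (h2 : q2 ∈ face f A)
    (hne : q1 ≠ q2) : ∃ p r : V, p ≠ r ∧ face f A = segment ℝ p r := by
  set u : V := q2 - q1 with hu
  have hune : u ≠ 0 := sub_ne_zero.2 (Ne.symm hne)
  have hfu : f u = 0 := face_mem_param hf h1 h2
  have hparam : ∀ x ∈ face f A, ∃ t : ℝ, x = q1 + t • u := by
    intro x hx
    have hfx : f (x - q1) = 0 := face_mem_param hf h1 hx
    have hcross : u.1 * (x - q1).2 = u.2 * (x - q1).1 := cross_eq_zero hf hfu hfx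
    obtain ⟨t, ht⟩ := exists_smul_of_cross hune hcross
    exact ⟨t, by rw [← ht]; abel⟩
  have hden : (0:ℝ) < u.1 ^ 2 + u.2 ^ 2 := by
    rcases (by by_contra hc; push_neg at hc; exact hune (Prod.ext hc.1 hc.2) :
        u.1 ≠ 0 ∨ u.2 ≠ 0) with h | h
    · positivity
    · positivity
  set ψ : V → ℝ := fun x => ((x.1 - q1.1) * u.1 + (x.2 - q1.2) * u.2) / (u.1 ^ 2 + u.2 ^ 2)
    with hψdef
  have hψ : ∀ t : ℝ, ψ (q1 + t • u) = t := by
    intro t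
    rw [hψdef]
    simp only [Prod.fst_add, Prod.snd_add, Prod.smul_fst, Prod.smul_snd, smul_eq_mul]
    field_simp
    ring
  have hψcont : Continuous ψ := by
    rw [hψdef]; fun_prop
  set T : Set ℝ := ψ '' (face f A) with hT
  have hTchar : T = {t : ℝ | q1 + t • u ∈ face f A} := by
    apply Set.Subset.antisymm
    · rintro t ⟨x, hx, rfl⟩
      obtain ⟨s, hs⟩ := hparam x hx
      rw [hs, hψ s]
      simp only [Set.mem_setOf_eq]
      rw [← hs]; exact hx
    · intro t ht
      exact ⟨q1 + t • u, ht, hψ t⟩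
  have hfacecl : IsClosed (face f A) := face_closed hA.isClosed f
  have hfacecomp : IsCompact (face f A) := hA.of_isClosed_subset hfacecl (face_subset f A)
  have hTcomp : IsCompact T := hfacecomp.image hψcont
  have hTconv : Convex ℝ T := by
    rw [hTchar]
    intro t ht s hs c d hc hd hcd
    have hd' : d = 1 - c := by linarith
    subst hd'
    have key : q1 + (c * t + (1 - c) * s) • u = c • (q1 + t • u) + (1 - c) • (q1 + s • u) := by
      ext <;> simp [smul_eq_mul] <;> ring
    simp only [smul_eq_mul, Set.mem_setOf_eq]
    rw [key]
    exact face_convex hconv f ht hs hc hd hcd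
  have h0T : (0:ℝ) ∈ T := by
    rw [hTchar]; simpa using h1
  have h1T : (1:ℝ) ∈ T := by
    rw [hTchar]
    simp only [one_smul, Set.mem_setOf_eq, hu]
    have : q1 + (q2 - q1) = q2 := by abel
    rw [this]; exact h2
  have hTIcc : T = Set.Icc (sInf T) (sSup T) :=
    eq_Icc_of_connected_compact ⟨⟨0, h0T⟩, hTconv.isPreconnected⟩ hTcomp
  set t0 := sInf T
  set t1 := sSup T
  have ht00 : t0 ≤ 0 := by
    have := hTIcc ▸ h0T; exact this.1
  have ht11 : (1:ℝ) ≤ t1 := by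
    have := hTIcc ▸ h1T; exact this.2
  have ht01 : t0 < t1 := by linarith
  refine ⟨q1 + t0 • u, q1 + t1 • u, ?_, ?_⟩
  · intro hc
    have : (t1 - t0) • u = 0 := by
      have := sub_eq_zero.2 hc
      rw [sub_smul]
      have h' : q1 + t0 • u - (q1 + t1 • u) = t0 • u - t1 • u := by abel
      rw [← neg_eq_zero, neg_sub]
      rw [← h', this]
    rcases smul_eq_zero.1 this with h | h
    · have : t1 - t0 ≠ 0 := by intro hc'; linarith
      exact this h
    · exact hune h
  · apply Set.Subset.antisymm
    · intro x hx
      obtain ⟨t, ht⟩ := hparam x hx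
      have htT : t ∈ T := by
        rw [hTchar]; simp only [Set.mem_setOf_eq]; rw [← ht]; exact hx
      have htIcc : t ∈ Set.Icc t0 t1 := hTIcc ▸ htT
      rw [segment_eq_image']
      refine ⟨(t - t0) / (t1 - t0),
        ⟨div_nonneg (by linarith [htIcc.1]) (by linarith),
         by rw [div_le_one (by linarith)]; linarith [htIcc.2]⟩, ?_⟩
      show q1 + t0 • u + ((t - t0) / (t1 - t0)) • (q1 + t1 • u - (q1 + t0 • u)) = x
      have hrp : q1 + t1 • u - (q1 + t0 • u) = (t1 - t0) • u := by
        rw [sub_smul]; abel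
      rw [hrp, smul_smul, div_mul_cancel₀ _ (by linarith : t1 - t0 ≠ 0)]
      rw [ht, sub_smul]; abel
    · intro x hx
      rw [segment_eq_image'] at hx
      obtain ⟨θ, hθ, rfl⟩ := hx
      show q1 + t0 • u + θ • (q1 + t1 • u - (q1 + t0 • u)) ∈ face f A
      have hrp : q1 + t1 • u - (q1 + t0 • u) = (t1 - t0) • u := by
        rw [sub_smul]; abel
      rw [hrp, smul_smul]
      have : q1 + t0 • u + (θ * (t1 - t0)) • u = q1 + (t0 + θ * (t1 - t0)) • u := by
        rw [add_smul]; abel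
      rw [this]
      have : t0 + θ * (t1 - t0) ∈ T := by
        rw [hTIcc]
        constructor
        · nlinarith [hθ.1, hθ.2]
        · nlinarith [hθ.1, hθ.2]
      rw [hTchar] at this
      exact this

/-! ### Edges from faces -/

lemma face_isEdge {A : Set V} (hA : IsCompact A) {f : LF} (hf : f ≠ 0)
    {p r : V} (hpr : p ≠ r) (hface : face f A = segment ℝ p r) :
    IsEdge A (segment ℝ p r) := by
  refine ⟨⟨p, r, hpr, rfl⟩, hface ▸ face_subset_frontier hf, ?_⟩
  rintro F ⟨c, d, rfl⟩ hFfr hsub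
  have hpF : p ∈ segment ℝ c d := hsub (left_mem_segment ℝ p r)
  have hrF : r ∈ segment ℝ c d := hsub (right_mem_segment ℝ p r)
  have hpface : p ∈ face f A := hface ▸ left_mem_segment ℝ p r
  have hrface : r ∈ face f A := hface ▸ right_mem_segment ℝ p r
  rw [segment_eq_image'] at hpF hrF
  obtain ⟨s, hs01, hsp⟩ := hpF
  obtain ⟨e, he01, hep⟩ := hrF
  have hse : s ≠ e := by
    intro hc; rw [hc] at hsp; rw [hsp] at hep; exact hpr (hep.symm ▸ rfl)
  have hfval : ∀ θ : ℝ, f (c + θ • (d - c)) = f c + θ * f (d - c) := by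
    intro θ; rw [map_add, map_smul]; rfl
  have hfp : f p = f c + s * f (d - c) := by rw [← hsp] at *; exact (hfval s)
  have hfr : f r = f c + e * f (d - c) := by rw [← hep] at *; exact (hfval e)
  have hfpr : f p = f r := by
    have e1 := hpface.2 r hrface.1
    have e2 := hrface.2 p hpface.1
    linarith
  have hfd : f (d - c) = 0 := by
    have : (s - e) * f (d - c) = 0 := by linarith
    rcases mul_eq_zero.1 this with h | h
    · exact absurd (by linarith : s = e) hse
    · exact h
  have hAcl : IsClosed A := hA.isClosed
  have hfrsub : frontier A ⊆ A := hAcl.frontier_subset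
  apply Set.Subset.antisymm _ hsub
  intro x hx
  rw [← hface]
  rw [segment_eq_image'] at hx
  obtain ⟨θ, hθ01, hθ⟩ := hx
  have hfx : f x = f c := by rw [← hθ, hfval, hfd]; ring
  have hxA : x ∈ A := hfrsub (hFfr (by
    rw [segment_eq_image']; exact ⟨θ, hθ01, hθ⟩))
  refine ⟨hxA, fun y hy => ?_⟩
  have : f y ≤ f p := hpface.2 y hy
  rw [hfx]; rw [hfp, hfd] at this; linarith

/-! ### Faces of segments -/

lemma f_on_segment {f : LF} {p q x : V} (h : f p = f q) (hx : x ∈ segment ℝ p q) :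
    f x = f p := by
  rw [segment_eq_image'] at hx
  obtain ⟨θ, _, rfl⟩ := hx
  rw [map_add, map_smul, smul_eq_mul, map_sub, h]
  ring

lemma face_segment_const {f : LF} {p q : V} (h : f p = f q) :
    face f (segment ℝ p q) = segment ℝ p q := by
  apply Set.Subset.antisymm (face_subset f _)
  intro x hx
  refine ⟨hx, fun y hy => ?_⟩
  rw [f_on_segment h hx, f_on_segment h hy]

lemma face_segment_left {f : LF} {p q : V} (h : f q < f p) :
    face f (segment ℝ p q) = {p} := by
  apply Set.Subset.antisymm
  · rintro x ⟨hx, hmax⟩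
    rw [segment_eq_image'] at hx
    obtain ⟨θ, hθ01, rfl⟩ := hx
    have hval : f (p + θ • (q - p)) = f p + θ * (f q - f p) := by
      rw [map_add, map_smul, map_sub]; rfl
    have hle := hmax p (left_mem_segment ℝ p q)
    rw [hval] at hle
    have hθ0 : θ = 0 := by nlinarith [hθ01.1, hθ01.2]
    simp [hθ0]
  · intro x hxp
    rw [Set.mem_singleton_iff] at hxp
    rw [hxp]
    refine ⟨left_mem_segment ℝ p q, fun y hy => ?_⟩
    rw [segment_eq_image'] at hy
    obtain ⟨θ, hθ01, rfl⟩ := hy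
    have hval : f (p + θ • (q - p)) = f p + θ * (f q - f p) := by
      rw [map_add, map_smul, map_sub]; rfl
    rw [hval]
    nlinarith [hθ01.1, hθ01.2]

/-! ### Segments, translation, extreme points -/

lemma segment_add_singleton (p q t : V) :
    segment ℝ p q + ({t} : Set V) = segment ℝ (p + t) (q + t) := by
  rw [Set.add_singleton]
  ext x
  constructor
  · rintro ⟨y, hy, rfl⟩
    obtain ⟨c, d, hc, hd, hcd, rfl⟩ := hy
    exact ⟨c, d, hc, hd, hcd, by
      have : c • (p + t) + d • (q + t) = c • p + d • q + (c + d) • t := by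
        rw [smul_add, smul_add, add_smul]; abel
      rw [this, hcd, one_smul]⟩
  · rintro ⟨c, d, hc, hd, hcd, rfl⟩
    refine ⟨c • p + d • q, ⟨c, d, hc, hd, hcd, rfl⟩, ?_⟩
    have : c • (p + t) + d • (q + t) = c • p + d • q + (c + d) • t := by
      rw [smul_add, smul_add, add_smul]; abel
    rw [this, hcd, one_smul]

lemma extreme_translate {s : Set V} {x t : V} (hx : x ∈ s.extremePoints ℝ) :
    x + t ∈ (s + ({t} : Set V)).extremePoints ℝ := by
  rw [Set.add_singleton]
  refine ⟨⟨x, hx.1, rfl⟩, ?_⟩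
  rintro y ⟨y', hy', rfl⟩ z ⟨z', hz', rfl⟩ hopen
  obtain ⟨c, d, hc, hd, hcd, hsum⟩ := hopen
  have hx' : x ∈ openSegment ℝ y' z' := by
    refine ⟨c, d, hc, hd, hcd, ?_⟩
    have heq : c • (y' + t) + d • (z' + t) = c • y' + d • z' + (c + d) • t := by
      rw [smul_add, smul_add, add_smul]; abel
    rw [heq, hcd, one_smul] at hsum
    have := congrArg (fun w => w - t) hsum
    simpa using this
  have h1 := hx.2 hy' hz' hx'
  rw [h1]

lemma extreme_of_subset {A B : Set V} {x : V} (hx : x ∈ A.extremePoints ℝ)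
    (hxB : x ∈ B) (hBA : B ⊆ A) : x ∈ B.extremePoints ℝ :=
  ⟨hxB, fun y hy z hz h => hx.2 (hBA hy) (hBA hz) h⟩

lemma endpoint_left_extreme {p q : V} (hpq : p ≠ q) :
    p ∈ (segment ℝ p q).extremePoints ℝ := by
  set g : LF := (p.1 - q.1) • ContinuousLinearMap.fst ℝ ℝ ℝ
    + (p.2 - q.2) • ContinuousLinearMap.snd ℝ ℝ ℝ with hg
  have hgapp : ∀ z : V, g z = (p.1 - q.1) * z.1 + (p.2 - q.2) * z.2 := by
    intro z; rw [hg]; simp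
  have hgq : g q < g p := by
    rw [hgapp, hgapp]
    have : p.1 ≠ q.1 ∨ p.2 ≠ q.2 := by
      by_contra hc; push_neg at hc; exact hpq (Prod.ext hc.1 hc.2)
    rcases this with h | h
    · nlinarith [mul_self_nonneg (p.1 - q.1), mul_self_nonneg (p.2 - q.2),
        mul_self_pos.2 (sub_ne_zero.2 h)]
    · nlinarith [mul_self_nonneg (p.1 - q.1), mul_self_nonneg (p.2 - q.2),
        mul_self_pos.2 (sub_ne_zero.2 h)]
  have hface := face_segment_left (f := g) hgq
  have := (face_isExtreme g (segment ℝ p q))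
  rw [hface] at this
  exact isExtreme_singleton.1 this

lemma endpoint_right_extreme {p q : V} (hpq : p ≠ q) :
    q ∈ (segment ℝ p q).extremePoints ℝ := by
  rw [segment_symm]
  exact endpoint_left_extreme (Ne.symm hpq)

/-! ### Lattice lemmas -/

lemma toR_injective : Function.Injective toR := by
  intro x y h
  have h1 : (x.1 : ℝ) = (y.1 : ℝ) := congrArg Prod.fst h
  have h2 : (x.2 : ℝ) = (y.2 : ℝ) := congrArg Prod.snd h
  exact Prod.ext (by exact_mod_cast h1) (by exact_mod_cast h2)

lemma toR_add (x y : ℤ × ℤ) : toR (x + y) = toR x + toR y := by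
  simp [toR, Prod.ext_iff]

lemma lattice_sub {x y : V} (hx : x ∈ latticePoints) (hy : y ∈ latticePoints) :
    x - y ∈ latticePoints := by
  obtain ⟨a, rfl⟩ := hx
  obtain ⟨b, rfl⟩ := hy
  exact ⟨a - b, by simp [toR, Prod.ext_iff]⟩

lemma lattice_add {x y : V} (hx : x ∈ latticePoints) (hy : y ∈ latticePoints) :
    x + y ∈ latticePoints := by
  obtain ⟨a, rfl⟩ := hx
  obtain ⟨b, rfl⟩ := hy
  exact ⟨a + b, by simp [toR, Prod.ext_iff]⟩

lemma toR_mem_lattice (a : ℤ × ℤ) : toR a ∈ latticePoints := ⟨a, rfl⟩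

/-! ### Lattice polytopes -/

lemma latticePolytope_isCompact {P : Set V} (h : IsLatticePolytope P) :
    IsCompact P ∧ Convex ℝ P ∧ P.Nonempty := by
  obtain ⟨S, hS, rfl⟩ := h
  obtain ⟨s, hs⟩ := hS
  refine ⟨(S.finite_toSet.image toR).isCompact_convexHull ℝ, convex_convexHull ℝ _,
    ⟨toR s, subset_convexHull ℝ _ ⟨s, hs, rfl⟩⟩⟩

lemma segment_isCompact (p q : V) : IsCompact (segment ℝ p q) := by
  rw [← convexHull_pair]
  exact ((Set.finite_singleton q).insert p).isCompact_convexHull ℝ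

lemma extremePoints_hull_lattice {S : Finset (ℤ × ℤ)} :
    (convexHull ℝ (toR '' ↑S)).extremePoints ℝ ⊆ latticePoints := by
  intro x hx
  obtain ⟨s, _, rfl⟩ := extremePoints_convexHull_subset hx
  exact toR_mem_lattice s

lemma image_toR_add (s t : Set (ℤ × ℤ)) : toR '' (s + t) = toR '' s + toR '' t := by
  ext x
  constructor
  · rintro ⟨y, ⟨u, hu, w, hw, rfl⟩, rfl⟩
    exact ⟨toR u, ⟨u, hu, rfl⟩, toR w, ⟨w, hw, rfl⟩, (toR_add u w).symm⟩
  · rintro ⟨-, ⟨u, hu, rfl⟩, -, ⟨w, hw, rfl⟩, rfl⟩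
    exact ⟨u + w, Set.add_mem_add hu hw, toR_add u w⟩

lemma sum_isLatticePolytope {S : Finset (ℤ × ℤ)} (hS : S.Nonempty) (a b : ℤ × ℤ) :
    IsLatticePolytope (convexHull ℝ (toR '' ↑S) + segment ℝ (toR a) (toR b)) := by
  classical
  refine ⟨S + {a, b}, ?_, ?_⟩
  · obtain ⟨s, hs⟩ := hS
    exact ⟨s + a, Finset.add_mem_add hs (by simp)⟩
  · rw [Finset.coe_add, image_toR_add, convexHull_add]
    congr 1
    have : toR '' ↑({a, b} : Finset (ℤ × ℤ)) = {toR a, toR b} := by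
      simp [Finset.coe_insert, Set.image_insert_eq]
    rw [this, convexHull_pair]

lemma interior_sum_nonempty {Q : Set V} (hint : (interior Q).Nonempty) (p q : V) :
    (interior (Q + segment ℝ p q)).Nonempty := by
  obtain ⟨z, hz⟩ := hint
  have h1 : Q + ({p} : Set V) ⊆ Q + segment ℝ p q :=
    Set.add_subset_add_left (by simp [left_mem_segment])
  have h2 : Q + ({p} : Set V) = (Homeomorph.addRight p) '' Q := by
    rw [Set.add_singleton]; rfl
  refine ⟨z + p, interior_mono h1 ?_⟩
  rw [h2, ← Homeomorph.image_interior]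
  exact ⟨z, hz, rfl⟩

/-! ### Key lemma for the converse: face of `L` a singleton -/

lemma key_singleton_face {Q Lset : Set V} (hQc : IsCompact Q) (hQne : Q.Nonempty)
    (hLc : IsCompact Lset) (hLne : Lset.Nonempty)
    (hQfr : ∀ y ∈ frontier Q, y ∈ latticePoints → y ∈ Q.extremePoints ℝ)
    {f : LF} (hf : f ≠ 0) {e : V} (he : e ∈ latticePoints)
    (hfaceL : face f Lset = {e}) {x : V} (hxface : x ∈ face f (Q + Lset))
    (hxlat : x ∈ latticePoints) : x ∈ (Q + Lset).extremePoints ℝ := by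
  have hadd := face_add hQc hQne hLc hLne f
  rw [hadd, hfaceL] at hxface
  obtain ⟨q, hq, e1, he1, rfl⟩ := hxface
  rw [Set.mem_singleton_iff] at he1
  rw [he1] at hxlat ⊢
  have hqlat : q ∈ latticePoints := by
    have : q = (q + e) - e := by abel
    rw [this]
    exact lattice_sub hxlat he
  have hqfr : q ∈ frontier Q := face_subset_frontier hf hq
  have hqext : q ∈ Q.extremePoints ℝ := hQfr q hqfr hqlat
  have hqfext : q ∈ (face f Q).extremePoints ℝ := extreme_of_subset hqext hq (face_subset f Q)
  have htrans : q + e ∈ (face f Q + ({e} : Set V)).extremePoints ℝ := extreme_translate hqfext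
  rw [← hfaceL, ← hadd] at htrans
  exact (face_isExtreme f (Q + Lset)).extremePoints_subset_extremePoints htrans

end Stmt0
end Helpers

open Stmt0

theorem statement0 (Q : Set V) (hQ : IsToricDiagram Q)
    (a b : ℤ × ℤ) (hab : a ≠ b) :
    IsToricDiagram (Q + segment ℝ (toR a) (toR b)) ↔
      ((∀ x ∈ segment ℝ (toR a) (toR b), x ∈ latticePoints → x = toR a ∨ x = toR b) ∧
        ∀ v : V, IsEdgeVector Q v → ¬ Par (toR b - toR a) v) := by
  classical
  obtain ⟨hQlat, hQint, hQfr⟩ := hQ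
  obtain ⟨S, hSne, hQeq⟩ := hQlat
  set a' : V := toR a with ha'
  set b' : V := toR b with hb'
  set L : Set V := segment ℝ a' b' with hLdef
  have hab' : a' ≠ b' := fun h => hab (toR_injective h)
  set w : V := b' - a' with hw
  have hwne : w ≠ 0 := sub_ne_zero.2 (Ne.symm hab')
  obtain ⟨hQc, hQconv, hQne⟩ := latticePolytope_isCompact ⟨S, hSne, hQeq⟩
  have hLc : IsCompact L := segment_isCompact a' b'
  have hLconv : Convex ℝ L := convex_segment _ _
  have hLne : L.Nonempty := ⟨a', left_mem_segment ℝ a' b'⟩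
  have hQLc : IsCompact (Q + L) := hQc.add hLc
  have hQLconv : Convex ℝ (Q + L) := hQconv.add hLconv
  have hQLint : (interior (Q + L)).Nonempty := interior_sum_nonempty hQint a' b'
  have hQext_lat : Q.extremePoints ℝ ⊆ latticePoints := by
    rw [hQeq]; exact extremePoints_hull_lattice
  have halat : a' ∈ latticePoints := toR_mem_lattice a
  have hblat : b' ∈ latticePoints := toR_mem_lattice b
  constructor
  · rintro ⟨-, -, htor⟩
    constructor
    · -- primitivity
      intro x hxL hxlat
      by_contra hc
      push_neg at hc
      obtain ⟨hxa, hxb⟩ := hc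
      set g : LF := w.2 • ContinuousLinearMap.fst ℝ ℝ ℝ - w.1 • ContinuousLinearMap.snd ℝ ℝ ℝ
        with hg
      have hgapp : ∀ z : V, g z = w.2 * z.1 - w.1 * z.2 := by
        intro z; rw [hg]; simp [smul_eq_mul]
      have hgw : g w = 0 := by rw [hgapp]; ring
      have hgne : g ≠ 0 := by
        intro h
        apply hwne
        have h1 : g (1, 0) = 0 := by rw [h]; rfl
        have h2 : g (0, 1) = 0 := by rw [h]; rfl
        rw [hgapp] at h1 h2
        simp at h1 h2
        exact Prod.ext h2 h1
      have hgab : g a' = g b' := by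
        have := map_sub g b' a'
        rw [← hw, hgw] at this
        linarith
      have hfacecomp : IsCompact (face g Q) :=
        hQc.of_isClosed_subset (face_closed hQc.isClosed g) (face_subset g Q)
      obtain ⟨v, hv⟩ := hfacecomp.extremePoints_nonempty (face_nonempty hQc hQne g)
      have hvQext : v ∈ Q.extremePoints ℝ :=
        (face_isExtreme g Q).extremePoints_subset_extremePoints hv
      have hvlat : v ∈ latticePoints := hQext_lat hvQext
      have hvQ : v ∈ Q := hv.1.1
      have hfaceL : face g L = L := by rw [hLdef]; exact face_segment_const hgab
      have hyface : v + x ∈ face g (Q + L) := by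
        rw [face_add hQc hQne hLc hLne g]
        exact Set.add_mem_add hv.1 (by rw [hfaceL]; exact hxL)
      have hyfr : v + x ∈ frontier (Q + L) := face_subset_frontier hgne hyface
      have hylat : v + x ∈ latticePoints := lattice_add hvlat hxlat
      have hyext := htor _ hyfr hylat
      obtain ⟨θ, hθ01, hθ⟩ : ∃ θ ∈ Set.Icc (0:ℝ) 1, a' + θ • (b' - a') = x := by
        have := hxL
        rw [hLdef, segment_eq_image'] at this
        obtain ⟨θ, h1, h2⟩ := this
        exact ⟨θ, h1, h2⟩
      have hθ0 : θ ≠ 0 := by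
        intro h; rw [h] at hθ; simp at hθ; exact hxa hθ.symm
      have hθ1 : θ ≠ 1 := by
        intro h
        apply hxb
        rw [← hθ, h, one_smul]
        abel
      have hopen : v + x ∈ openSegment ℝ (v + a') (v + b') := by
        rw [openSegment_eq_image']
        refine ⟨θ, ⟨lt_of_le_of_ne hθ01.1 (Ne.symm hθ0), lt_of_le_of_ne hθ01.2 hθ1⟩, ?_⟩
        have h1 : v + b' - (v + a') = b' - a' := by abel
        rw [h1, ← hθ]; abel
      have := hyext.2 (Set.add_mem_add hvQ (left_mem_segment ℝ a' b'))
        (Set.add_mem_add hvQ (right_mem_segment ℝ a' b')) hopen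
      have h1 : v + a' = v + x := this
      exact hxa (by have := add_left_cancel h1; rw [this])
    · -- no parallel edge
      rintro v0 ⟨p, r, hpr, hEdge, rfl⟩ hPar
      have hEfr : segment ℝ p r ⊆ frontier Q := hEdge.2.1
      have hpQ : p ∈ Q := hQc.isClosed.frontier_subset (hEfr (left_mem_segment ℝ p r))
      have hrQ : r ∈ Q := hQc.isClosed.frontier_subset (hEfr (right_mem_segment ℝ p r))
      have hmseg : (1/2 : ℝ) • p + (1/2 : ℝ) • r ∈ segment ℝ p r :=
        ⟨1/2, 1/2, by norm_num, by norm_num, by norm_num, rfl⟩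
      obtain ⟨f, hf, hmface⟩ := exists_supporting hQconv hQc.isClosed hQint (hEfr hmseg)
      have hfm : f ((1/2 : ℝ) • p + (1/2 : ℝ) • r) = (1/2) * f p + (1/2) * f r := by
        rw [map_add, map_smul, map_smul]; rfl
      have hple := hmface.2 p hpQ
      have hrle := hmface.2 r hrQ
      rw [hfm] at hple hrle
      have hfpm : f p = f ((1/2 : ℝ) • p + (1/2 : ℝ) • r) := by rw [hfm]; linarith
      have hfrm : f r = f ((1/2 : ℝ) • p + (1/2 : ℝ) • r) := by rw [hfm]; linarith
      have hpface : p ∈ face f Q := mem_face_of_eq hmface hpQ hfpm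
      have hrface : r ∈ face f Q := mem_face_of_eq hmface hrQ hfrm
      have hv0ne : r - p ≠ 0 := sub_ne_zero.2 (Ne.symm hpr)
      have hfv0 : f (r - p) = 0 := by rw [map_sub]; rw [hfpm, hfrm]; ring
      have hcross : (r - p).1 * w.2 = (r - p).2 * w.1 := by
        have : w.1 * (r - p).2 = w.2 * (r - p).1 := hPar
        linarith
      obtain ⟨t, htw⟩ := exists_smul_of_cross hv0ne hcross
      have hfw : f w = 0 := by rw [htw, map_smul, hfv0, smul_eq_mul, mul_zero]
      have htne : t ≠ 0 := by
        rintro rfl; rw [zero_smul] at htw; exact hwne htw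
      have hfab : f a' = f b' := by
        have := map_sub f b' a'
        rw [← hw, hfw] at this
        linarith
      obtain ⟨p0, r0, hp0r0, hfaceQ⟩ := face_eq_segment hQc hQconv hf hpface hrface hpr
      have hsub : segment ℝ p r ⊆ segment ℝ p0 r0 := by
        rw [← hfaceQ]
        exact (face_convex hQconv f).segment_subset hpface hrface
      have hFeq : segment ℝ p0 r0 = segment ℝ p r :=
        hEdge.2.2 _ ⟨p0, r0, rfl⟩ (hfaceQ ▸ face_subset_frontier hf) hsub
      have hfaceQ' : face f Q = segment ℝ p r := hfaceQ.trans hFeq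
      have hpext : p ∈ Q.extremePoints ℝ :=
        (face_isExtreme f Q).extremePoints_subset_extremePoints
          (by rw [hfaceQ']; exact endpoint_left_extreme hpr)
      have hplat : p ∈ latticePoints := hQext_lat hpext
      have hfaceL : face f L = L := by rw [hLdef]; exact face_segment_const hfab
      have hfadd := face_add hQc hQne hLc hLne f
      rcases htne.lt_or_gt with htneg | htpos
      · -- t < 0 : use y = p + a'
        have hyface : p + a' ∈ face f (Q + L) := by
          rw [hfadd]
          exact Set.add_mem_add hpface (by rw [hfaceL]; exact left_mem_segment ℝ a' b')
        have hyfr := face_subset_frontier hf hyface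
        have hylat : p + a' ∈ latticePoints := lattice_add hplat halat
        have hyext := htor _ hyfr hylat
        have hX1 : p + b' ∈ Q + L := Set.add_mem_add hpQ (right_mem_segment ℝ a' b')
        have hX2 : r + a' ∈ Q + L := Set.add_mem_add hrQ (left_mem_segment ℝ a' b')
        have hopen : p + a' ∈ openSegment ℝ (p + b') (r + a') := by
          rw [openSegment_eq_image']
          have h1t : (0:ℝ) < 1 - t := by linarith
          refine ⟨(-t) / (1 - t), ⟨div_pos (by linarith) h1t, ?_⟩, ?_⟩
          · rw [div_lt_one h1t]; linarith
          · show p + b' + (-t / (1 - t)) • (r + a' - (p + b')) = p + a'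
            have hdiff : r + a' - (p + b') = (1 - t) • (r - p) := by
              rw [sub_smul, one_smul, ← htw, hw]; abel
            rw [hdiff, smul_smul, div_mul_cancel₀ _ (by linarith : (1:ℝ) - t ≠ 0)]
            have hns : (-t) • (r - p) = -w := by rw [neg_smul, ← htw]
            rw [hns, hw]; abel
        have := (hyext.2 hX1 hX2 hopen)
        exact hab' (add_left_cancel this).symm
      · -- 0 < t : use y = p + b'
        have hyface : p + b' ∈ face f (Q + L) := by
          rw [hfadd]
          exact Set.add_mem_add hpface (by rw [hfaceL]; exact right_mem_segment ℝ a' b')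
        have hyfr := face_subset_frontier hf hyface
        have hylat : p + b' ∈ latticePoints := lattice_add hplat hblat
        have hyext := htor _ hyfr hylat
        have hX1 : p + a' ∈ Q + L := Set.add_mem_add hpQ (left_mem_segment ℝ a' b')
        have hX2 : r + b' ∈ Q + L := Set.add_mem_add hrQ (right_mem_segment ℝ a' b')
        have hopen : p + b' ∈ openSegment ℝ (p + a') (r + b') := by
          rw [openSegment_eq_image']
          have h1t : (0:ℝ) < 1 + t := by linarith
          refine ⟨t / (1 + t), ⟨div_pos htpos h1t, ?_⟩, ?_⟩
          · rw [div_lt_one h1t]; linarith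
          · show p + a' + (t / (1 + t)) • (r + b' - (p + a')) = p + b'
            have hdiff : r + b' - (p + a') = (1 + t) • (r - p) := by
              rw [add_smul, one_smul, ← htw, hw]; abel
            rw [hdiff, smul_smul, div_mul_cancel₀ _ (by linarith : (1:ℝ) + t ≠ 0)]
            rw [← htw, hw]; abel
        have := (hyext.2 hX1 hX2 hopen)
        exact hab' (add_left_cancel this)
  · rintro ⟨hprim, hpar⟩
    refine ⟨by rw [hQeq]; exact sum_isLatticePolytope hSne a b, hQLint, ?_⟩
    intro x hxfr hxlat
    obtain ⟨f, hf, hxface⟩ := exists_supporting hQLconv hQLc.isClosed hQLint hxfr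
    have hfadd := face_add hQc hQne hLc hLne f
    by_cases hfab : f a' = f b'
    · -- f is constant on L
      have hfaceL : face f L = L := by rw [hLdef]; exact face_segment_const hfab
      have hfw : f w = 0 := by rw [hw, map_sub, hfab]; ring
      obtain ⟨v, hv⟩ := face_nonempty hQc hQne f
      have hsing : ∀ v' ∈ face f Q, v' = v := by
        intro v' hv'
        by_contra hne'
        obtain ⟨p, r, hpr, hfaceQ⟩ := face_eq_segment hQc hQconv hf hv hv' (Ne.symm hne')
        have hedge := face_isEdge hQc hf hpr hfaceQ
        apply hpar (r - p) ⟨p, r, hpr, hedge, rfl⟩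
        have hpf : p ∈ face f Q := by rw [hfaceQ]; exact left_mem_segment ℝ p r
        have hrf : r ∈ face f Q := by rw [hfaceQ]; exact right_mem_segment ℝ p r
        have hfrp : f (r - p) = 0 := face_mem_param hf hpf hrf
        exact cross_eq_zero hf hfw hfrp
      have hfaceQv : face f Q = {v} := Set.eq_singleton_iff_unique_mem.2 ⟨hv, hsing⟩
      have hvext : v ∈ Q.extremePoints ℝ := by
        apply (face_isExtreme f Q).extremePoints_subset_extremePoints
        rw [hfaceQv, extremePoints_singleton]
        rfl
      have hvlat : v ∈ latticePoints := hQext_lat hvext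
      have hseg : face f (Q + L) = segment ℝ (a' + v) (b' + v) := by
        rw [hfadd, hfaceQv, hfaceL, add_comm ({v} : Set V) L, hLdef, segment_add_singleton]
      have hxseg : x ∈ segment ℝ (a' + v) (b' + v) := by rw [← hseg]; exact hxface
      obtain ⟨q, hq, l, hl, hxeq⟩ : x ∈ ({v} : Set V) + L := by
        rw [← hfaceL, ← hfaceQv, ← hfadd]; exact hxface
      rw [Set.mem_singleton_iff] at hq
      have hllat : l ∈ latticePoints := by
        have : l = x - v := by rw [← hxeq, hq]; exact (add_sub_cancel_left v l).symm
        rw [this]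
        exact lattice_sub hxlat hvlat
      have hlab : l = a' ∨ l = b' := hprim l hl hllat
      have habv : a' + v ≠ b' + v := by
        intro h; exact hab' (add_right_cancel h)
      have hxext_seg : x ∈ (segment ℝ (a' + v) (b' + v)).extremePoints ℝ := by
        rcases hlab with rfl | rfl
        · have : x = a' + v := by rw [← hxeq, hq]; abel
          rw [this]
          exact endpoint_left_extreme habv
        · have : x = b' + v := by rw [← hxeq, hq]; abel
          rw [this]
          exact endpoint_right_extreme habv
      apply (face_isExtreme f (Q + L)).extremePoints_subset_extremePoints
      rw [hseg]
      exact hxext_seg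
    · -- f is not constant on L : face of L is an endpoint
      rcases lt_or_gt_of_ne hfab with hlt | hlt
      · -- f a' < f b' : face f L = {b'}
        have hfaceL : face f L = {b'} := by
          rw [hLdef, segment_symm]
          exact face_segment_left hlt
        exact key_singleton_face hQc hQne hLc hLne hQfr hf hblat hfaceL hxface hxlat
      · -- f b' < f a' : face f L = {a'}
        have hfaceL : face f L = {a'} := by
          rw [hLdef]
          exact face_segment_left hlt
        exact key_singleton_face hQc hQne hLc hLne hQfr hf halat hfaceL hxface hxlat
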